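/- arXiv:2209.13835 — 4 statements merged into one kernel-verified Lean document; each statement's English description precedes it below -/
import Mathlib

section
/- Let a be an element of a unital ring having a (generalized) Drazin inverse. If a^d denotes its g-Drazin inverse, then for the 2×2 anti-triangular matrix M = [[a, 1], [0, 0]] over the ring, M has a g-Drazin inverse given by M^d = [[a^d, (a^d)^2], [0, 0]], i.e. P = [[a^2, a], [0, 0]] satisfies P^d = [[(a^d)^2, (a^d)^3], [0, 0]] and P^π = [[a^π, −a^d], [0, 1]]. -/
open Filter Topology

/-- An element of a normed ring is quasinilpotent if `‖a^n‖^(1/n) → 0`. -/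
def IsQuasinilpotent {A : Type*} [NormedRing A] (a : A) : Prop :=
  Filter.Tendsto (fun n : ℕ => ‖a ^ n‖ ^ ((1 : ℝ) / n)) Filter.atTop (nhds 0)

/-- `b` is a generalized Drazin inverse of `a`. -/
def IsGDrazinInverse {A : Type*} [NormedRing A] (a b : A) : Prop :=
  a * b = b * a ∧ b * a * b = b ∧ IsQuasinilpotent (a - a ^ 2 * b)

attribute [local instance] Matrix.linftyOpNormedRing

private lemma quasi_of_pow_bound {B : Type*} [NormedRing B] {q : B} (hq : IsQuasinilpotent q)
    {M : Type*} [NormedRing M] (X : M) (c : ℝ) (hc : 0 ≤ c) (g : ℕ → ℕ)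
    (hg : ∀ n, n + 2 ≤ 2 * g n)
    (hb : ∀ n, ‖X ^ (n + 2)‖ ≤ ‖q ^ (g n)‖ * c) :
    IsQuasinilpotent X := by
  unfold IsQuasinilpotent at hq ⊢
  rw [← Filter.tendsto_add_atTop_iff_nat 2]
  have hgt : Tendsto g atTop atTop :=
    Filter.tendsto_atTop_atTop.2 fun b => ⟨2 * b, fun n hn => by have := hg n; omega⟩
  have hyg : Tendsto (fun n => ‖q ^ (g n)‖ ^ ((1 : ℝ) / (g n))) atTop (𝓝 0) := hq.comp hgt
  set K := max 1 c with hK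
  have hK1 : (1 : ℝ) ≤ K := le_max_left _ _
  have htend : Tendsto (fun n => K * (‖q ^ (g n)‖ ^ ((1 : ℝ) / (g n))) ^ ((1 : ℝ) / 2))
      atTop (𝓝 0) := by
    have h2 := hyg.rpow_const (p := (1 : ℝ) / 2) (Or.inr (by norm_num))
    rw [Real.zero_rpow (by norm_num)] at h2
    simpa using h2.const_mul K
  refine squeeze_zero' (.of_forall fun n => Real.rpow_nonneg (norm_nonneg _) _) ?_ htend
  have hev : ∀ᶠ n in atTop, ‖q ^ (g n)‖ ^ ((1 : ℝ) / (g n)) ≤ 1 :=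
    (hyg.eventually_le_const (by norm_num)).mono fun n h => h
  filter_upwards [hev] with n hn1
  have epos : (0 : ℝ) < (n : ℝ) + 2 := by positivity
  have ecast : ((n + 2 : ℕ) : ℝ) = (n : ℝ) + 2 := by push_cast; ring
  have hgn1 : 1 ≤ g n := by have := hg n; omega
  have hgnpos : (0 : ℝ) < (g n : ℝ) := by exact_mod_cast hgn1
  have A1 : ‖X ^ (n + 2)‖ ^ ((1 : ℝ) / ((n + 2 : ℕ) : ℝ))
      ≤ (‖q ^ (g n)‖ * c) ^ ((1 : ℝ) / ((n + 2 : ℕ) : ℝ)) :=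
    Real.rpow_le_rpow (norm_nonneg _) (hb n) (by rw [ecast]; positivity)
  have A2 : (‖q ^ (g n)‖ * c) ^ ((1 : ℝ) / ((n + 2 : ℕ) : ℝ))
      = ‖q ^ (g n)‖ ^ ((1 : ℝ) / ((n + 2 : ℕ) : ℝ)) * c ^ ((1 : ℝ) / ((n + 2 : ℕ) : ℝ)) :=
    Real.mul_rpow (norm_nonneg _) hc
  have A3 : c ^ ((1 : ℝ) / ((n + 2 : ℕ) : ℝ)) ≤ K := by
    calc c ^ ((1 : ℝ) / ((n + 2 : ℕ) : ℝ)) ≤ K ^ ((1 : ℝ) / ((n + 2 : ℕ) : ℝ)) :=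
          Real.rpow_le_rpow hc (le_max_right _ _) (by rw [ecast]; positivity)
      _ ≤ K ^ (1 : ℝ) := Real.rpow_le_rpow_of_exponent_le hK1 (by
            rw [ecast, div_le_one epos]; linarith)
      _ = K := Real.rpow_one K
  have A4 : ‖q ^ (g n)‖ ^ ((1 : ℝ) / ((n + 2 : ℕ) : ℝ))
      ≤ (‖q ^ (g n)‖ ^ ((1 : ℝ) / (g n))) ^ ((1 : ℝ) / 2) := by
    have hrw : ‖q ^ (g n)‖ ^ ((1 : ℝ) / ((n + 2 : ℕ) : ℝ))
        = (‖q ^ (g n)‖ ^ ((1 : ℝ) / (g n))) ^ ((g n : ℝ) / ((n : ℝ) + 2)) := by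
      rw [← Real.rpow_mul (norm_nonneg _), ecast]
      congr 1
      field_simp
    rw [hrw]
    refine Real.rpow_le_rpow_of_exponent_ge' (Real.rpow_nonneg (norm_nonneg _) _) hn1
      (by norm_num) ?_
    rw [le_div_iff₀ epos]
    have := hg n
    have hcast : ((n : ℝ) + 2) ≤ 2 * (g n : ℝ) := by exact_mod_cast this
    linarith
  calc ‖X ^ (n + 2)‖ ^ ((1 : ℝ) / ((n + 2 : ℕ) : ℝ))
      ≤ ‖q ^ (g n)‖ ^ ((1 : ℝ) / ((n + 2 : ℕ) : ℝ)) * c ^ ((1 : ℝ) / ((n + 2 : ℕ) : ℝ)) := by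
        rw [← A2]; exact A1
    _ ≤ (‖q ^ (g n)‖ ^ ((1 : ℝ) / (g n))) ^ ((1 : ℝ) / 2) * K :=
        mul_le_mul A4 A3 (Real.rpow_nonneg hc _)
          (Real.rpow_nonneg (Real.rpow_nonneg (norm_nonneg _) _) _)
    _ = K * (‖q ^ (g n)‖ ^ ((1 : ℝ) / (g n))) ^ ((1 : ℝ) / 2) := mul_comm _ _

private lemma S_decomp {A : Type*} [NormedRing A] (q : A) (k : ℕ) :
    (!![q ^ (k + 1), q ^ k; 0, 0] : Matrix (Fin 2) (Fin 2) A)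
      = Matrix.diagonal (fun _ => q ^ k) * !![q, 1; 0, 0] := by
  ext i j
  fin_cases i <;> fin_cases j <;>
    simp [Matrix.mul_apply, Fin.sum_univ_two, pow_succ]

private lemma S_norm_le {A : Type*} [NormedRing A] (q : A) (k : ℕ) :
    ‖(!![q ^ (k + 1), q ^ k; 0, 0] : Matrix (Fin 2) (Fin 2) A)‖
      ≤ ‖q ^ k‖ * ‖(!![q, 1; 0, 0] : Matrix (Fin 2) (Fin 2) A)‖ := by
  rw [S_decomp]
  refine le_trans (norm_mul_le _ _) ?_
  rw [Matrix.linfty_opNorm_diagonal, pi_norm_const]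

theorem stmt3 {A : Type*} [NormedRing A] [NormedAlgebra ℂ A] [CompleteSpace A]
    (a ad : A) (h : IsGDrazinInverse a ad) :
    IsGDrazinInverse (!![a, 1; 0, 0] : Matrix (Fin 2) (Fin 2) A) !![ad, ad ^ 2; 0, 0]
      ∧ IsGDrazinInverse (!![a ^ 2, a; 0, 0] : Matrix (Fin 2) (Fin 2) A)
          !![ad ^ 2, ad ^ 3; 0, 0]
      ∧ (1 : Matrix (Fin 2) (Fin 2) A) - !![a ^ 2, a; 0, 0] * !![ad ^ 2, ad ^ 3; 0, 0]
          = !![1 - a * ad, -ad; 0, 1] := by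
  obtain ⟨h1, h2, hq⟩ := h
  set q : A := a - a ^ 2 * ad with hqdef
  -- scalar identities
  have e1 : a * ad ^ 2 = ad := by rw [sq, ← mul_assoc, h1, h2]
  have e5 : ad ^ 2 * a = ad := by rw [sq, mul_assoc, ← h1, ← mul_assoc, h2]
  have e2 : a ^ 2 * ad ^ 2 = a * ad := by rw [sq, mul_assoc, e1]
  have e3 : a ^ 2 * ad ^ 3 = ad := by
    rw [pow_succ ad 2, ← mul_assoc, e2, mul_assoc, ← sq, e1]
  have e4 : ad ^ 2 * a ^ 2 = a * ad := by rw [sq a, ← mul_assoc, e5, ← h1]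
  have e6 : a * ad ^ 3 = ad ^ 2 := by rw [pow_succ ad 2, ← mul_assoc, e1, ← sq]
  have e7 : a * ad ^ 4 = ad ^ 3 := by rw [pow_succ ad 3, ← mul_assoc, e6, ← pow_succ]
  have key1 : a ^ 2 * ad * (a * ad) = a ^ 2 * ad := by
    rw [mul_assoc (a ^ 2) ad (a * ad), ← mul_assoc ad a ad, h2]
  have hqp : q * (1 - a * ad) = q := by
    rw [hqdef]
    calc (a - a ^ 2 * ad) * (1 - a * ad)
        = a - a ^ 2 * ad - (a ^ 2 * ad - a ^ 2 * ad * (a * ad)) := by noncomm_ring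
      _ = a - a ^ 2 * ad := by rw [key1]; noncomm_ring
  have k1 : ad * a ^ 2 = a ^ 2 * ad := by
    rw [sq, ← mul_assoc, ← h1, mul_assoc, ← h1, mul_assoc]
  have key2 : a ^ 2 * ad * (a ^ 2 * ad) = a ^ 2 * (a * ad) := by
    calc a ^ 2 * ad * (a ^ 2 * ad) = a ^ 2 * (ad * a ^ 2) * ad := by noncomm_ring
      _ = a ^ 2 * (a ^ 2 * ad) * ad := by rw [k1]
      _ = a ^ 2 * (a ^ 2 * ad ^ 2) := by noncomm_ring
      _ = a ^ 2 * (a * ad) := by rw [e2]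
  have hq2 : q ^ 2 = a ^ 2 - a ^ 2 * (a * ad) := by
    rw [hqdef]
    calc (a - a ^ 2 * ad) ^ 2
        = a ^ 2 - a ^ 2 * (ad * a) - a ^ 2 * (a * ad) + a ^ 2 * ad * (a ^ 2 * ad) := by
          noncomm_ring
      _ = a ^ 2 - a ^ 2 * (a * ad) := by rw [← h1, key2]; noncomm_ring
  -- Part 1
  have hMB : (!![a, 1; 0, 0] : Matrix (Fin 2) (Fin 2) A) * !![ad, ad ^ 2; 0, 0]
      = !![a * ad, ad; 0, 0] := by
    rw [Matrix.mul_fin_two]; simp [e1]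
  have hBM : (!![ad, ad ^ 2; 0, 0] : Matrix (Fin 2) (Fin 2) A) * !![a, 1; 0, 0]
      = !![a * ad, ad; 0, 0] := by
    rw [Matrix.mul_fin_two]; simp [← h1]
  have hN : (!![a, 1; 0, 0] : Matrix (Fin 2) (Fin 2) A)
      - !![a, 1; 0, 0] ^ 2 * !![ad, ad ^ 2; 0, 0] = !![q, 1 - a * ad; 0, 0] := by
    rw [sq (!![a, 1; 0, 0] : Matrix (Fin 2) (Fin 2) A), Matrix.mul_fin_two,
      Matrix.mul_fin_two]
    ext i j
    fin_cases i <;> fin_cases j <;> simp [hqdef, ← sq, e2] <;> noncomm_ring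
  have powN : ∀ n : ℕ, (!![q, 1 - a * ad; 0, 0] : Matrix (Fin 2) (Fin 2) A) ^ (n + 2)
      = !![q ^ (n + 2), q ^ (n + 1); 0, 0] := by
    intro n
    induction n with
    | zero => rw [sq, Matrix.mul_fin_two]; simp [hqp, ← sq]
    | succ m ih =>
      rw [pow_succ, ih, Matrix.mul_fin_two]
      have h3 : q ^ (m + 2) * (1 - a * ad) = q ^ (m + 2) := by
        rw [pow_succ, mul_assoc, hqp]
      simp [h3, ← pow_succ]
  have part1 : IsGDrazinInverse (!![a, 1; 0, 0] : Matrix (Fin 2) (Fin 2) A)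
      !![ad, ad ^ 2; 0, 0] := by
    refine ⟨by rw [hMB, hBM], ?_, ?_⟩
    · rw [hBM, Matrix.mul_fin_two]
      have g1 : a * ad * ad = ad := by rw [mul_assoc, ← sq, e1]
      have g2 : a * ad * ad ^ 2 = ad ^ 2 := by rw [mul_assoc, ← pow_succ', e6]
      simp [g1, g2]
    · rw [hN]
      refine quasi_of_pow_bound hq _ ‖(!![q, 1; 0, 0] : Matrix (Fin 2) (Fin 2) A)‖
        (norm_nonneg _) (fun n => n + 1) (fun n => by show n + 2 ≤ 2 * (n + 1); omega) (fun n => ?_)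
      rw [powN n]
      exact S_norm_le q (n + 1)
  -- Part 2
  have hPB : (!![a ^ 2, a; 0, 0] : Matrix (Fin 2) (Fin 2) A) * !![ad ^ 2, ad ^ 3; 0, 0]
      = !![a * ad, ad; 0, 0] := by
    rw [Matrix.mul_fin_two]; simp [e2, e3]
  have hBP : (!![ad ^ 2, ad ^ 3; 0, 0] : Matrix (Fin 2) (Fin 2) A) * !![a ^ 2, a; 0, 0]
      = !![a * ad, ad; 0, 0] := by
    rw [Matrix.mul_fin_two]; simp [e4, e5]
  have hN2 : (!![a ^ 2, a; 0, 0] : Matrix (Fin 2) (Fin 2) A)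
      - !![a ^ 2, a; 0, 0] ^ 2 * !![ad ^ 2, ad ^ 3; 0, 0] = !![q ^ 2, q; 0, 0] := by
    rw [sq (!![a ^ 2, a; 0, 0] : Matrix (Fin 2) (Fin 2) A), Matrix.mul_fin_two,
      Matrix.mul_fin_two]
    have f1 : a ^ 2 * a ^ 2 * ad ^ 2 = a ^ 2 * (a * ad) := by rw [mul_assoc, e2]
    have f2 : a ^ 2 * a ^ 2 * ad ^ 3 = a ^ 2 * ad := by rw [mul_assoc, e3]
    rw [hq2]
    ext i j
    fin_cases i <;> fin_cases j <;> simp [f1, f2, hqdef, hq2] <;> noncomm_ring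
  have powN2 : ∀ n : ℕ, (!![q ^ 2, q; 0, 0] : Matrix (Fin 2) (Fin 2) A) ^ (n + 2)
      = !![q ^ (2 * n + 4), q ^ (2 * n + 3); 0, 0] := by
    intro n
    induction n with
    | zero =>
      rw [sq, Matrix.mul_fin_two]
      ext i j
      fin_cases i <;> fin_cases j <;> simp [← pow_add, ← pow_succ] <;>
        (try (congr 1 <;> omega))
    | succ m ih =>
      rw [pow_succ, ih, Matrix.mul_fin_two]
      ext i j
      fin_cases i <;> fin_cases j <;> simp [← pow_add, ← pow_succ] <;>
        (try (congr 1 <;> omega))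
  have part2 : IsGDrazinInverse (!![a ^ 2, a; 0, 0] : Matrix (Fin 2) (Fin 2) A)
      !![ad ^ 2, ad ^ 3; 0, 0] := by
    refine ⟨by rw [hPB, hBP], ?_, ?_⟩
    · rw [hBP, Matrix.mul_fin_two]
      have g2 : a * ad * ad ^ 2 = ad ^ 2 := by rw [mul_assoc, ← pow_succ', e6]
      have g3 : a * ad * ad ^ 3 = ad ^ 3 := by rw [mul_assoc, ← pow_succ', e7]
      simp [g2, g3]
    · rw [hN2]
      refine quasi_of_pow_bound hq _ ‖(!![q, 1; 0, 0] : Matrix (Fin 2) (Fin 2) A)‖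
        (norm_nonneg _) (fun n => 2 * n + 3) (fun n => by show n + 2 ≤ 2 * (2 * n + 3); omega) (fun n => ?_)
      rw [powN2 n]
      have := S_norm_le q (2 * n + 3)
      simpa using this
  refine ⟨part1, part2, ?_⟩
  rw [hPB, Matrix.one_fin_two]
  ext i j
  fin_cases i <;> fin_cases j <;> simp
end

section
/- Let E, F be bounded operators on a Banach space such that M = [[E, I], [F, 0]] has a g-Drazin inverse M^d. Then the matrix N = [[E, −F], [−I, 0]] has a g-Drazin inverse given by N^d = [[E, I], [−I, 0]] · (M^d)^2 · [[I, 0], [0, −F]]. -/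
open Filter Topology

/-- The block operator matrix `[[a, b], [c, d]]` acting on `X × X`. -/
noncomputable def blk {X : Type*} [NormedAddCommGroup X] [NormedSpace ℂ X]
    (a b c d : X →L[ℂ] X) : (X × X) →L[ℂ] (X × X) :=
  ((a.comp (ContinuousLinearMap.fst ℂ X X)) + (b.comp (ContinuousLinearMap.snd ℂ X X))).prod
    ((c.comp (ContinuousLinearMap.fst ℂ X X)) + (d.comp (ContinuousLinearMap.snd ℂ X X)))

section aux
variable {A : Type*} [NormedRing A] [NormedAlgebra ℂ A] [CompleteSpace A]

/-- Quasinilpotent iff the spectral radius vanishes, via Gelfand's formula. -/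
lemma quasi_iff_sr (a : A) : IsQuasinilpotent a ↔ spectralRadius ℂ a = 0 := by
  have hG := spectrum.pow_norm_pow_one_div_tendsto_nhds_spectralRadius a
  constructor
  · intro h
    have h' : Tendsto (fun n : ℕ => ENNReal.ofReal (‖a ^ n‖ ^ (1 / n : ℝ))) atTop (𝓝 0) := by
      have := (ENNReal.continuous_ofReal.tendsto 0).comp h
      simpa [Function.comp_def, one_div] using this
    exact tendsto_nhds_unique hG h'
  · intro h
    rw [h] at hG
    have h2 := (ENNReal.tendsto_toReal (by simp)).comp hG
    have : ∀ n : ℕ, (ENNReal.ofReal (‖a ^ n‖ ^ (1 / n : ℝ))).toReal = ‖a ^ n‖ ^ ((1:ℝ) / n) := by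
      intro n
      rw [ENNReal.toReal_ofReal (Real.rpow_nonneg (norm_nonneg _) _)]
    exact Filter.Tendsto.congr this h2

/-- The spectral radius of `a * b` equals that of `b * a`. -/
lemma sr_mul_comm (a b : A) : spectralRadius ℂ (a * b) = spectralRadius ℂ (b * a) := by
  have key : ∀ c : A, spectralRadius ℂ c = ⨆ k ∈ spectrum ℂ c \ {0}, (‖k‖₊ : ENNReal) := by
    intro c
    rw [spectralRadius]
    apply le_antisymm
    · refine iSup₂_le fun k hk => ?_
      by_cases hk0 : k = 0
      · simp [hk0]
      · exact le_iSup₂ (f := fun k _ => (‖k‖₊ : ENNReal)) k ⟨hk, hk0⟩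
    · exact iSup₂_le fun k hk => le_iSup₂ (f := fun k _ => (‖k‖₊ : ENNReal)) k hk.1
  rw [key, key, spectrum.nonzero_mul_comm]

lemma quasi_mul_comm {a b : A} (h : IsQuasinilpotent (a * b)) : IsQuasinilpotent (b * a) := by
  rw [quasi_iff_sr] at h ⊢
  rw [← sr_mul_comm, h]

/-- Cline's formula for the generalized Drazin inverse. -/
lemma cline {a b d : A} (h : IsGDrazinInverse (b * a) d) :
    IsGDrazinInverse (a * b) (a * d ^ 2 * b) := by
  obtain ⟨h1, h2, h3⟩ := h
  have h1' : ∀ x : A, b * (a * (d * x)) = d * (b * (a * x)) := by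
    intro x
    simp only [← mul_assoc]
    rw [h1]
    simp only [mul_assoc]
  have hk1 : ∀ x : A, b * (a * (d * (d * x))) = d * x := by
    intro x
    simp only [← mul_assoc]
    rw [h1, h2]
  have hk2 : ∀ x : A, d * (d * (b * (a * x))) = d * x := by
    intro x
    simp only [← mul_assoc]
    rw [mul_assoc (d * d) b a, mul_assoc d d (b * a), ← h1, ← mul_assoc d (b * a) d, h2]
  refine ⟨?_, ?_, ?_⟩
  · simp only [pow_two, mul_assoc]
    rw [hk1, hk2]
  · simp only [pow_two, mul_assoc]
    rw [hk1, h1', hk2]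
  · have key : a * b - (a * b) ^ 2 * (a * d ^ 2 * b) = a * (b - b * (a * (d * b))) := by
      simp only [pow_two, mul_assoc, mul_sub]
      rw [hk1]
    rw [key]
    apply quasi_mul_comm
    have h5 : b * a * d * (b * a) = b * a * (b * a) * d := by
      rw [mul_assoc (b * a) d (b * a), ← h1, ← mul_assoc]
    have key2 : (b - b * (a * (d * b))) * a = b * a - b * a * (b * a) * d := by
      rw [sub_mul, ← h5]
      congr 1
      simp only [mul_assoc]
    rw [key2]
    have h6 : b * a - (b * a) ^ 2 * d = b * a - b * a * (b * a) * d := by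
      rw [pow_two]
    rw [← h6]
    exact h3

end aux

theorem stmt6 {X : Type*} [NormedAddCommGroup X] [NormedSpace ℂ X] [CompleteSpace X]
    (E F : X →L[ℂ] X) (Md : (X × X) →L[ℂ] (X × X))
    (hM : IsGDrazinInverse (blk E 1 F 0) Md) :
    IsGDrazinInverse (blk E (-F) (-1) 0)
      (blk E 1 (-1) 0 * Md ^ 2 * blk 1 0 0 (-F)) := by
  have hba : blk (1 : X →L[ℂ] X) 0 0 (-F) * blk E 1 (-1) 0 = blk E 1 F 0 := by
    ext x <;> simp [blk, ContinuousLinearMap.mul_apply]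
  have hab : blk E 1 (-1) 0 * blk (1 : X →L[ℂ] X) 0 0 (-F) = blk E (-F) (-1) 0 := by
    ext x <;> simp [blk, ContinuousLinearMap.mul_apply]
  rw [← hba] at hM
  rw [← hab]
  exact cline hM
end

section
/- Let E, F be elements of a unital Banach algebra such that F has g-Drazin inverse, E F^π has g-Drazin inverse, F^π E F F^d = 0 where F^π = 1 − F F^d. Then F^π E has g-Drazin inverse and (F^π E)^d = F^π E^d, provided E has g-Drazin inverse E^d and F^π E F F^d = 0. -/
open Filter Topology

lemma rpow_pow_eq {x : ℝ} (hx : 0 ≤ x) {k : ℕ} (hk : 1 ≤ k) :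
    (x ^ ((1:ℝ)/k)) ^ k = x := by
  have hk0 : (k:ℝ) ≠ 0 := Nat.cast_ne_zero.mpr (by omega)
  rw [← Real.rpow_natCast (x ^ ((1:ℝ)/k)) k, ← Real.rpow_mul hx]
  rw [one_div, inv_mul_cancel₀ hk0, Real.rpow_one]

lemma qn_zero {A : Type*} [NormedRing A] {u : A} (w : A) (C r : ℝ)
    (hC : 0 ≤ C) (hr : 0 ≤ r) (hu : IsQuasinilpotent u)
    (hb : ∀ k : ℕ, 1 ≤ k → ‖w‖ ≤ C * r ^ k * ‖u ^ k‖) : w = 0 := by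
  by_contra hw
  have hwpos : 0 < ‖w‖ := norm_pos_iff.mpr hw
  have hrpos : (0:ℝ) < r + 1 := by linarith
  set ε : ℝ := 1 / (2 * (r + 1)) with hε
  have hεpos : 0 < ε := by positivity
  have h1 : ∀ᶠ k : ℕ in atTop, ‖u ^ k‖ ^ ((1:ℝ)/(k:ℕ)) < ε := hu.eventually (gt_mem_nhds hεpos)
  have h2 : Tendsto (fun k : ℕ => C * (1/2:ℝ) ^ k) atTop (nhds 0) := by
    simpa using (tendsto_pow_atTop_nhds_zero_of_lt_one (by norm_num) (by norm_num : (1/2:ℝ) < 1)).const_mul C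
  have h3 : ∀ᶠ k in atTop, C * (1/2:ℝ) ^ k < ‖w‖ := h2.eventually (gt_mem_nhds hwpos)
  obtain ⟨k, hk⟩ := ((h1.and h3).and (eventually_ge_atTop 1)).exists
  obtain ⟨⟨hk1, hk2⟩, hk3⟩ := hk
  -- ‖u^k‖ < ε^k
  have huk : ‖u ^ k‖ < ε ^ k := by
    have := pow_lt_pow_left₀ hk1 (Real.rpow_nonneg (norm_nonneg _) _) (by omega : k ≠ 0)
    rwa [rpow_pow_eq (norm_nonneg _) hk3] at this
  have key : ‖w‖ < ‖w‖ := by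
    calc ‖w‖ ≤ C * r ^ k * ‖u ^ k‖ := hb k hk3
    _ ≤ C * r ^ k * ε ^ k := by
        apply mul_le_mul_of_nonneg_left huk.le (by positivity)
    _ = C * (r * ε) ^ k := by rw [mul_pow]; ring
    _ ≤ C * (1/2:ℝ) ^ k := by
        apply mul_le_mul_of_nonneg_left _ hC
        apply pow_le_pow_left₀ (by positivity)
        rw [mul_one_div, div_le_div_iff₀ (by positivity) (by norm_num : (0:ℝ) < 2)]
        nlinarith
    _ < ‖w‖ := hk2
  exact absurd key (lt_irrefl _)

lemma qn_dom {A : Type*} [NormedRing A] {M a : A} (C : ℝ) (hC : 0 ≤ C)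
    (hM : IsQuasinilpotent M)
    (hb : ∀ n : ℕ, 2 ≤ n → ‖a ^ n‖ ≤ C * ‖M ^ (n - 1)‖) :
    IsQuasinilpotent a := by
  rw [IsQuasinilpotent, Metric.tendsto_atTop]
  intro ε hεpos
  set D : ℝ := max C 1 with hD
  have hD1 : (1:ℝ) ≤ D := le_max_right _ _
  have hD0 : (0:ℝ) < D := lt_of_lt_of_le one_pos hD1
  set ε' : ℝ := min (ε / (2 * D)) 1 with hε'
  have hε'pos : 0 < ε' := lt_min (by positivity) one_pos
  have hε'le1 : ε' ≤ 1 := min_le_right _ _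
  set δ : ℝ := ε' ^ 2 with hδ
  have hδpos : 0 < δ := by positivity
  have hδle1 : δ ≤ 1 := by
    rw [hδ]; nlinarith
  have h1 : ∀ᶠ m : ℕ in atTop, ‖M ^ m‖ ^ ((1:ℝ)/(m:ℕ)) < δ := hM.eventually (gt_mem_nhds hδpos)
  obtain ⟨N₁, hN₁⟩ := eventually_atTop.mp h1
  refine ⟨N₁ + 2, fun n hn => ?_⟩
  have hn2 : 2 ≤ n := by omega
  set m : ℕ := n - 1 with hm
  have hm1 : 1 ≤ m := by omega
  have hmN : N₁ ≤ m := by omega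
  -- ‖M^m‖ ≤ δ^m
  have hMm : ‖M ^ m‖ ≤ δ ^ m := by
    have := pow_lt_pow_left₀ (hN₁ m hmN) (Real.rpow_nonneg (norm_nonneg _) _) (by omega : m ≠ 0)
    rw [rpow_pow_eq (norm_nonneg _) hm1] at this
    exact this.le
  -- ‖a^n‖ ≤ D * δ^m
  have han : ‖a ^ n‖ ≤ D * δ ^ m := by
    calc ‖a ^ n‖ ≤ C * ‖M ^ m‖ := hb n hn2
    _ ≤ D * δ ^ m := mul_le_mul (le_max_left _ _) hMm (norm_nonneg _) hD0.le
  -- take rpow 1/n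
  have hn0 : (n:ℝ) ≠ 0 := Nat.cast_ne_zero.mpr (by omega)
  have hnpos : (0:ℝ) < n := by positivity
  have step1 : ‖a ^ n‖ ^ ((1:ℝ)/n) ≤ (D * δ ^ m) ^ ((1:ℝ)/n) :=
    Real.rpow_le_rpow (norm_nonneg _) han (by positivity)
  have step2 : (D * δ ^ m) ^ ((1:ℝ)/n) = D ^ ((1:ℝ)/n) * (δ ^ m) ^ ((1:ℝ)/n) :=
    Real.mul_rpow hD0.le (by positivity)
  have step3 : D ^ ((1:ℝ)/n) ≤ D := by
    calc D ^ ((1:ℝ)/n) ≤ D ^ (1:ℝ) := by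
          apply Real.rpow_le_rpow_of_exponent_le hD1
          rw [div_le_one hnpos]
          exact_mod_cast Nat.one_le_iff_ne_zero.mpr (by omega)
    _ = D := Real.rpow_one D
  have step4 : (δ ^ m) ^ ((1:ℝ)/n) ≤ ε' := by
    have e1 : (δ ^ m) ^ ((1:ℝ)/n) = δ ^ ((m:ℝ)/n) := by
      rw [← Real.rpow_natCast δ m, ← Real.rpow_mul hδpos.le]
      ring_nf
    have e2 : δ ^ ((m:ℝ)/n) ≤ δ ^ ((1:ℝ)/2) := by
      apply Real.rpow_le_rpow_of_exponent_ge hδpos hδle1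
      rw [div_le_div_iff₀ (by norm_num : (0:ℝ) < 2) hnpos]
      have hcast : (m:ℝ) = (n:ℝ) - 1 := by
        rw [hm, Nat.cast_sub (by omega)]; norm_num
      rw [hcast]
      have : (2:ℝ) ≤ n := by exact_mod_cast hn2
      linarith
    have e3 : δ ^ ((1:ℝ)/2) = ε' := by
      rw [hδ, ← Real.rpow_natCast ε' 2, ← Real.rpow_mul hε'pos.le]
      norm_num
    rw [e1]; rw [e3] at e2; exact e2
  have final : ‖a ^ n‖ ^ ((1:ℝ)/n) ≤ ε / 2 := by
    calc ‖a ^ n‖ ^ ((1:ℝ)/n) ≤ D ^ ((1:ℝ)/n) * (δ ^ m) ^ ((1:ℝ)/n) := by rw [← step2]; exact step1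
    _ ≤ D * ε' := mul_le_mul step3 step4 (Real.rpow_nonneg (by positivity) _) hD0.le
    _ ≤ D * (ε / (2 * D)) := mul_le_mul_of_nonneg_left (min_le_left _ _) hD0.le
    _ = ε / 2 := by field_simp
  rw [Real.dist_eq, sub_zero, abs_of_nonneg (Real.rpow_nonneg (norm_nonneg _) _)]
  linarith

lemma idem_pow {A : Type*} [Monoid A] {e : A} (he : e * e = e) :
    ∀ k : ℕ, 1 ≤ k → e ^ k = e := by
  intro k hk
  induction k with
  | zero => omega
  | succ n ih =>
    rcases Nat.lt_or_ge 1 (n+1) with h1 | h1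
    · have hn : 1 ≤ n := by omega
      rw [pow_succ, ih hn, he]
    · have : n = 0 := by omega
      subst this; rw [pow_one]

lemma aux {A : Type*} [NormedRing A] (E Ed p y : A)
    (hpp : p * p = p)
    (hE : IsGDrazinInverse E Ed)
    (hy : IsGDrazinInverse (E * p) y)
    (h0 : p * E * (1 - p) = 0) :
    IsGDrazinInverse (p * E) (p * Ed) := by
  obtain ⟨hEc, hEi, hEqn⟩ := hE
  obtain ⟨hsy, hysy, hyqn⟩ := hy
  rw [pow_two] at hEqn hyqn
  -- basic facts
  have hpEp : p * E * p = p * E := by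
    calc p * E * p = p * E - p * E * (1 - p) := by noncomm_ring
    _ = p * E := by rw [h0, sub_zero]
  have hEq1 : E * (1 - p) = (1 - p) * (E * (1 - p)) := by
    calc E * (1 - p) = p * E * (1 - p) + (1 - p) * (E * (1 - p)) := by noncomm_ring
    _ = (1 - p) * (E * (1 - p)) := by rw [h0, zero_add]
  have hEkq : ∀ k, 1 ≤ k → p * E ^ k * (1 - p) = 0 := by
    intro k hk
    induction k with
    | zero => omega
    | succ n ih =>
      rcases Nat.lt_or_ge 1 (n+1) with h1 | h1
      · have hn : 1 ≤ n := by omega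
        calc p * E ^ (n+1) * (1 - p) = p * E ^ n * (E * (1 - p)) := by
              rw [pow_succ]; noncomm_ring
        _ = p * E ^ n * ((1 - p) * (E * (1 - p))) := by rw [← hEq1]
        _ = (p * E ^ n * (1 - p)) * (E * (1 - p)) := by noncomm_ring
        _ = 0 := by rw [ih hn, zero_mul]
      · have : n = 0 := by omega
        subst this; rw [pow_one]; exact h0
  have hak : ∀ k, 1 ≤ k → (p * E) ^ k = p * E ^ k := by
    intro k hk
    induction k with
    | zero => omega
    | succ n ih =>
      rcases Nat.lt_or_ge 1 (n+1) with h1 | h1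
      · have hn : 1 ≤ n := by omega
        have hEkp : p * E ^ n * p = p * E ^ n := by
          calc p * E ^ n * p = p * E ^ n - p * E ^ n * (1 - p) := by noncomm_ring
          _ = p * E ^ n := by rw [hEkq n hn, sub_zero]
        calc (p * E) ^ (n+1) = (p * E) ^ n * (p * E) := pow_succ _ _
        _ = (p * E ^ n) * (p * E) := by rw [ih hn]
        _ = (p * E ^ n * p) * E := by noncomm_ring
        _ = (p * E ^ n) * E := by rw [hEkp]
        _ = p * E ^ (n+1) := by rw [pow_succ]; noncomm_ring
      · have : n = 0 := by omega
        subst this; rw [pow_one, pow_one]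
  -- Cline identities
  have c1 : y * y * (E * p) = y := by
    calc y * y * (E * p) = y * (y * (E * p)) := by noncomm_ring
    _ = y * (E * p * y) := by rw [← hsy]
    _ = y * (E * p) * y := by noncomm_ring
    _ = y := hysy
  have c2 : E * p * (y * y) = y := by
    calc E * p * (y * y) = (E * p * y) * y := by noncomm_ring
    _ = (y * (E * p)) * y := by rw [hsy]
    _ = y := hysy
  -- z and its g-Drazin properties for p*E
  set z := p * y * y * E with hzdef
  have l1 : p * E * z = p * y * E := by
    rw [hzdef]
    calc p * E * (p * y * y * E) = p * (E * p * (y * y)) * E := by noncomm_ring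
    _ = p * y * E := by rw [c2]
  have l2 : z * (p * E) = p * y * E := by
    rw [hzdef]
    calc p * y * y * E * (p * E) = p * (y * y * (E * p)) * E := by noncomm_ring
    _ = p * y * E := by rw [c1]
  have zc : p * E * z = z * (p * E) := by rw [l1, l2]
  have zi : z * (p * E) * z = z := by
    rw [l2, hzdef]
    calc p * y * E * (p * y * y * E) = p * (y * (E * p) * y) * (y * E) := by noncomm_ring
    _ = p * y * (y * E) := by rw [hysy]
    _ = p * y * y * E := by noncomm_ring
  -- quasinilpotent part via Cline
  have hA1 : p * E - p * E * (p * E) * z = p * (1 - E * p * y) * E := by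
    rw [hzdef]
    calc p * E - p * E * (p * E) * (p * y * y * E)
        = p * E - p * (E * p) * (E * p * (y * y)) * E := by noncomm_ring
    _ = p * E - p * (E * p) * y * E := by rw [c2]
    _ = p * (1 - E * p * y) * E := by noncomm_ring
  have hstep : ∀ X : A, (p * E - p * E * (p * E) * z) * (p * X * E)
      = p * ((E * p - E * p * (E * p) * y) * X) * E := by
    intro X
    rw [hzdef]
    calc (p * E - p * E * (p * E) * (p * y * y * E)) * (p * X * E)
        = p * (E * p) * X * E - p * (E * p) * (E * p * (y * y)) * (E * p) * X * E := by
          noncomm_ring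
    _ = p * (E * p) * X * E - p * (E * p) * y * (E * p) * X * E := by rw [c2]
    _ = p * (E * p) * X * E - p * (E * p) * (y * (E * p)) * X * E := by noncomm_ring
    _ = p * (E * p) * X * E - p * (E * p) * (E * p * y) * X * E := by rw [← hsy]
    _ = p * ((E * p - E * p * (E * p) * y) * X) * E := by noncomm_ring
  have hMabsorb : (E * p - E * p * (E * p) * y) * (1 - E * p * y)
      = E * p - E * p * (E * p) * y := by
    calc (E * p - E * p * (E * p) * y) * (1 - E * p * y)
        = E * p - E * p * (E * p) * y
          - (E * p * (E * p) * y - E * p * (E * p) * (y * (E * p) * y)) := by noncomm_ring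
    _ = E * p - E * p * (E * p) * y - (E * p * (E * p) * y - E * p * (E * p) * y) := by
          rw [hysy]
    _ = E * p - E * p * (E * p) * y := by noncomm_ring
  have hAn : ∀ k, 1 ≤ k → (p * E - p * E * (p * E) * z) ^ (k + 1)
      = p * (E * p - E * p * (E * p) * y) ^ k * E := by
    intro k hk
    induction k with
    | zero => omega
    | succ n ih =>
      rcases Nat.lt_or_ge 1 (n+1) with hgt | hle
      · have hn : 1 ≤ n := by omega
        calc (p * E - p * E * (p * E) * z) ^ (n + 1 + 1)
            = (p * E - p * E * (p * E) * z) * (p * E - p * E * (p * E) * z) ^ (n + 1) := by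
              rw [pow_succ']
        _ = (p * E - p * E * (p * E) * z) * (p * (E * p - E * p * (E * p) * y) ^ n * E) := by
              rw [ih hn]
        _ = p * ((E * p - E * p * (E * p) * y) * (E * p - E * p * (E * p) * y) ^ n) * E :=
              hstep _
        _ = p * (E * p - E * p * (E * p) * y) ^ (n + 1) * E := by rw [← pow_succ']
      · have : n = 0 := by omega
        subst this
        calc (p * E - p * E * (p * E) * z) ^ (0 + 1 + 1)
            = (p * E - p * E * (p * E) * z) * (p * E - p * E * (p * E) * z) := by
              rw [pow_succ', pow_one]
        _ = (p * E - p * E * (p * E) * z) * (p * (1 - E * p * y) * E) := by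
              nth_rewrite 2 [hA1]; rfl
        _ = p * ((E * p - E * p * (E * p) * y) * (1 - E * p * y)) * E := hstep _
        _ = p * (E * p - E * p * (E * p) * y) * E := by rw [hMabsorb]
        _ = p * (E * p - E * p * (E * p) * y) ^ (0 + 1) * E := by rw [pow_one]
  have hyqn' : IsQuasinilpotent (E * p - E * p * (E * p) * y) := hyqn
  have zqn : IsQuasinilpotent (p * E - (p * E) ^ 2 * z) := by
    rw [pow_two]
    apply qn_dom (‖p‖ * ‖E‖) (by positivity) hyqn'
    intro n hn
    have hform : (p * E - p * E * (p * E) * z) ^ n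
        = p * (E * p - E * p * (E * p) * y) ^ (n - 1) * E := by
      have := hAn (n - 1) (by omega)
      rwa [show n - 1 + 1 = n from by omega] at this
    rw [hform]
    calc ‖p * (E * p - E * p * (E * p) * y) ^ (n - 1) * E‖
        ≤ ‖p * (E * p - E * p * (E * p) * y) ^ (n - 1)‖ * ‖E‖ := norm_mul_le _ _
    _ ≤ ‖p‖ * ‖(E * p - E * p * (E * p) * y) ^ (n - 1)‖ * ‖E‖ := by
        apply mul_le_mul_of_nonneg_right (norm_mul_le _ _) (norm_nonneg _)
    _ = ‖p‖ * ‖E‖ * ‖(E * p - E * p * (E * p) * y) ^ (n - 1)‖ := by ring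
  -- Part 2 : z = z * (E * Ed)
  have hz2 : z * z * (p * E) = z := by
    calc z * z * (p * E) = z * (z * (p * E)) := by noncomm_ring
    _ = z * (p * E * z) := by rw [← zc]
    _ = z * (p * E) * z := by noncomm_ring
    _ = z := zi
  have hzp : z * p = z := by
    calc z * p = (z * z * (p * E)) * p := by rw [hz2]
    _ = z * z * (p * E * p) := by noncomm_ring
    _ = z * z * (p * E) := by rw [hpEp]
    _ = z := hz2
  have he' : (z * (p * E)) * (z * (p * E)) = z * (p * E) := by
    calc (z * (p * E)) * (z * (p * E)) = (z * (p * E) * z) * (p * E) := by noncomm_ring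
    _ = z * (p * E) := by rw [zi]
  have hcz : Commute z (p * E) := zc.symm
  have hzkk : ∀ k, 1 ≤ k → z ^ (k + 1) * (p * E) ^ k = z := by
    intro k hk
    calc z ^ (k + 1) * (p * E) ^ k = z * (z ^ k * (p * E) ^ k) := by
          rw [pow_succ']; noncomm_ring
    _ = z * ((z * (p * E)) ^ k) := by rw [← hcz.mul_pow]
    _ = z * (z * (p * E)) := by rw [idem_pow he' k hk]
    _ = z * z * (p * E) := by noncomm_ring
    _ = z := hz2
  have hGidem : (E * Ed) * (E * Ed) = E * Ed := by
    calc (E * Ed) * (E * Ed) = E * (Ed * E * Ed) := by noncomm_ring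
    _ = E * Ed := by rw [hEi]
  have hcomN : E * (1 - E * Ed) = (1 - E * Ed) * E := by
    calc E * (1 - E * Ed) = E - E * (E * Ed) := by noncomm_ring
    _ = E - E * (Ed * E) := by rw [hEc]
    _ = (1 - E * Ed) * E := by noncomm_ring
  have hNGidem : (1 - E * Ed) * (1 - E * Ed) = 1 - E * Ed := by
    calc (1 - E * Ed) * (1 - E * Ed)
        = 1 - E * Ed - (E * Ed - (E * Ed) * (E * Ed)) := by noncomm_ring
    _ = 1 - E * Ed - (E * Ed - E * Ed) := by rw [hGidem]
    _ = 1 - E * Ed := by noncomm_ring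
  have hcomN' : Commute E (1 - E * Ed) := hcomN
  have hNk' : ∀ k, 1 ≤ k → E ^ k * (1 - E * Ed) = (E - E * E * Ed) ^ k := by
    intro k hk
    calc E ^ k * (1 - E * Ed) = E ^ k * (1 - E * Ed) ^ k := by rw [idem_pow hNGidem k hk]
    _ = (E * (1 - E * Ed)) ^ k := (hcomN'.mul_pow k).symm
    _ = (E - E * E * Ed) ^ k := by
          rw [show E * (1 - E * Ed) = E - E * E * Ed from by noncomm_ring]
  have hBzeq : ∀ k, 1 ≤ k → z - z * (E * Ed) = z ^ (k + 1) * p * (E - E * E * Ed) ^ k := by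
    intro k hk
    calc z - z * (E * Ed) = (z ^ (k + 1) * (p * E) ^ k) * (1 - E * Ed) := by
          rw [hzkk k hk]; noncomm_ring
    _ = (z ^ (k + 1) * (p * E ^ k)) * (1 - E * Ed) := by rw [hak k hk]
    _ = z ^ (k + 1) * p * (E ^ k * (1 - E * Ed)) := by noncomm_ring
    _ = z ^ (k + 1) * p * (E - E * E * Ed) ^ k := by rw [hNk' k hk]
  have hB0 : z - z * (E * Ed) = 0 := by
    apply qn_zero (z - z * (E * Ed)) (‖z‖ * ‖p‖) ‖z‖ (by positivity) (norm_nonneg z) hEqn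
    intro k hk
    rw [hBzeq k hk]
    calc ‖z ^ (k + 1) * p * (E - E * E * Ed) ^ k‖
        ≤ ‖z ^ (k + 1) * p‖ * ‖(E - E * E * Ed) ^ k‖ := norm_mul_le _ _
    _ ≤ ‖z ^ (k + 1)‖ * ‖p‖ * ‖(E - E * E * Ed) ^ k‖ :=
        mul_le_mul_of_nonneg_right (norm_mul_le _ _) (norm_nonneg _)
    _ ≤ ‖z‖ ^ (k + 1) * ‖p‖ * ‖(E - E * E * Ed) ^ k‖ :=
        mul_le_mul_of_nonneg_right
          (mul_le_mul_of_nonneg_right (norm_pow_le' z k.succ_pos) (norm_nonneg p))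
          (norm_nonneg _)
    _ = ‖z‖ * ‖p‖ * ‖z‖ ^ k * ‖(E - E * E * Ed) ^ k‖ := by rw [pow_succ']; ring
  have hB : z = z * (E * Ed) := sub_eq_zero.mp hB0
  have hBe : p * E * z * Ed = z := by
    calc p * E * z * Ed = z * (p * E) * Ed := by rw [zc]
    _ = z * p * (E * Ed) := by noncomm_ring
    _ = z * (E * Ed) := by rw [hzp]
    _ = z := hB.symm
  -- Part 3 : p * Ed = p * E * z * (p * Ed)
  have hEdG : Ed * (E * Ed) = Ed := by
    calc Ed * (E * Ed) = Ed * E * Ed := by noncomm_ring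
    _ = Ed := hEi
  have hcED : Commute E Ed := hEc
  have hEdk : ∀ k : ℕ, E ^ k * Ed ^ (k + 1) = Ed := by
    intro k
    induction k with
    | zero => simp
    | succ n ih =>
      calc E ^ (n + 1) * Ed ^ (n + 1 + 1)
          = E ^ n * (E * Ed ^ (n + 1)) * Ed := by
            rw [pow_succ E n, pow_succ Ed (n + 1)]; noncomm_ring
      _ = E ^ n * (Ed ^ (n + 1) * E) * Ed := by rw [(hcED.pow_right (n + 1)).eq]
      _ = (E ^ n * Ed ^ (n + 1)) * (E * Ed) := by noncomm_ring
      _ = Ed * (E * Ed) := by rw [ih]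
      _ = Ed := hEdG
  have hpEdk : ∀ k, 1 ≤ k → p * Ed = (p * E) ^ k * Ed ^ (k + 1) := by
    intro k hk
    calc p * Ed = p * (E ^ k * Ed ^ (k + 1)) := by rw [hEdk k]
    _ = (p * E ^ k) * Ed ^ (k + 1) := by noncomm_ring
    _ = (p * E) ^ k * Ed ^ (k + 1) := by rw [hak k hk]
  have he : (p * E * z) * (p * E * z) = p * E * z := by
    calc (p * E * z) * (p * E * z) = p * E * (z * (p * E) * z) := by noncomm_ring
    _ = p * E * z := by rw [zi]
  have hcomm_e : (1 - p * E * z) * (p * E) = p * E - p * E * (p * E) * z := by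
    calc (1 - p * E * z) * (p * E) = p * E - p * E * (z * (p * E)) := by noncomm_ring
    _ = p * E - p * E * (p * E * z) := by rw [← zc]
    _ = p * E - p * E * (p * E) * z := by noncomm_ring
  have hcomm2 : (p * E) * (1 - p * E * z) = (1 - p * E * z) * (p * E) := by
    calc (p * E) * (1 - p * E * z) = p * E - p * E * (p * E) * z := by noncomm_ring
    _ = (1 - p * E * z) * (p * E) := hcomm_e.symm
  have h1idem : (1 - p * E * z) * (1 - p * E * z) = 1 - p * E * z := by
    calc (1 - p * E * z) * (1 - p * E * z)
        = 1 - p * E * z - (p * E * z - (p * E * z) * (p * E * z)) := by noncomm_ring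
    _ = 1 - p * E * z - (p * E * z - p * E * z) := by rw [he]
    _ = 1 - p * E * z := by noncomm_ring
  have hcommC : Commute (1 - p * E * z) (p * E) := hcomm2.symm
  have h1me : ∀ k, 1 ≤ k → (1 - p * E * z) * (p * E) ^ k
      = (p * E - p * E * (p * E) * z) ^ k := by
    intro k hk
    calc (1 - p * E * z) * (p * E) ^ k = (1 - p * E * z) ^ k * (p * E) ^ k := by
          rw [idem_pow h1idem k hk]
    _ = ((1 - p * E * z) * (p * E)) ^ k := (hcommC.mul_pow k).symm
    _ = (p * E - p * E * (p * E) * z) ^ k := by rw [hcomm_e]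
  have hApart : ∀ k, 1 ≤ k → (1 - p * E * z) * (p * Ed)
      = (p * E - p * E * (p * E) * z) ^ k * Ed ^ (k + 1) := by
    intro k hk
    calc (1 - p * E * z) * (p * Ed)
        = (1 - p * E * z) * ((p * E) ^ k * Ed ^ (k + 1)) := by rw [hpEdk k hk]
    _ = ((1 - p * E * z) * (p * E) ^ k) * Ed ^ (k + 1) := by noncomm_ring
    _ = (p * E - p * E * (p * E) * z) ^ k * Ed ^ (k + 1) := by rw [h1me k hk]
  have zqn2 : IsQuasinilpotent (p * E - p * E * (p * E) * z) := by
    have := zqn; rw [pow_two] at this; exact this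
  have hA0 : (1 - p * E * z) * (p * Ed) = 0 := by
    apply qn_zero ((1 - p * E * z) * (p * Ed)) ‖Ed‖ ‖Ed‖ (norm_nonneg Ed) (norm_nonneg Ed)
      zqn2
    intro k hk
    rw [hApart k hk]
    calc ‖(p * E - p * E * (p * E) * z) ^ k * Ed ^ (k + 1)‖
        ≤ ‖(p * E - p * E * (p * E) * z) ^ k‖ * ‖Ed ^ (k + 1)‖ := norm_mul_le _ _
    _ ≤ ‖(p * E - p * E * (p * E) * z) ^ k‖ * ‖Ed‖ ^ (k + 1) :=
        mul_le_mul_of_nonneg_left (norm_pow_le' Ed k.succ_pos) (norm_nonneg _)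
    _ = ‖Ed‖ * ‖Ed‖ ^ k * ‖(p * E - p * E * (p * E) * z) ^ k‖ := by rw [pow_succ']; ring
  have hfin1 : p * Ed = p * E * z * (p * Ed) := by
    have hsub : p * Ed - p * E * z * (p * Ed) = 0 := by
      calc p * Ed - p * E * z * (p * Ed) = (1 - p * E * z) * (p * Ed) := by noncomm_ring
      _ = 0 := hA0
    exact sub_eq_zero.mp hsub
  have hfinal : p * Ed = z := by
    calc p * Ed = p * E * z * (p * Ed) := hfin1
    _ = p * E * (z * p) * Ed := by noncomm_ring
    _ = p * E * z * Ed := by rw [hzp]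
    _ = z := hBe
  rw [hfinal]
  exact ⟨zc, zi, zqn⟩

theorem stmt11 {A : Type*} [NormedRing A] [NormedAlgebra ℂ A] [CompleteSpace A]
    (E F Fd Ed : A) (hF : IsGDrazinInverse F Fd) (hE : IsGDrazinInverse E Ed)
    (hEFpi : ∃ y, IsGDrazinInverse (E * (1 - F * Fd)) y)
    (h : (1 - F * Fd) * E * (F * Fd) = 0) :
    IsGDrazinInverse ((1 - F * Fd) * E) ((1 - F * Fd) * Ed) := by
  obtain ⟨y, hy⟩ := hEFpi
  have h0 : (1 - F * Fd) * E * (1 - (1 - F * Fd)) = 0 := by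
    rw [sub_sub_cancel]; exact h
  have hq : F * Fd * (F * Fd) = F * Fd := by
    calc F * Fd * (F * Fd) = F * (Fd * F * Fd) := by noncomm_ring
    _ = F * Fd := by rw [hF.2.1]
  have hpp : (1 - F * Fd) * (1 - F * Fd) = 1 - F * Fd := by
    calc (1 - F * Fd) * (1 - F * Fd)
        = 1 - F * Fd - (F * Fd - F * Fd * (F * Fd)) := by noncomm_ring
    _ = 1 - F * Fd - (F * Fd - F * Fd) := by rw [hq]
    _ = 1 - F * Fd := by noncomm_ring
  exact aux E Ed (1 - F * Fd) y hpp hE hy h0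
end

section
/- Cline's formula for g-Drazin inverses: let a, b be elements of a unital Banach algebra such that ab has a g-Drazin inverse. Then ba has a g-Drazin inverse and (ba)^d = b((ab)^d)^2 a. -/
open Filter Topology

lemma isQuasinilpotent_iff_radius {A : Type*} [NormedRing A] [NormedAlgebra ℂ A]
    [CompleteSpace A] (x : A) : IsQuasinilpotent x ↔ spectralRadius ℂ x = 0 := by
  have hg := spectrum.pow_norm_pow_one_div_tendsto_nhds_spectralRadius x
  constructor
  · intro hq
    refine (tendsto_nhds_unique hg ?_)
    have : Tendsto (fun n : ℕ => ENNReal.ofReal (‖x ^ n‖ ^ ((1 : ℝ) / n))) atTop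
        (𝓝 (ENNReal.ofReal 0)) := ENNReal.tendsto_ofReal hq
    simpa using this
  · intro hr
    rw [hr] at hg
    have h2 : Tendsto (fun n : ℕ =>
        (ENNReal.ofReal (‖x ^ n‖ ^ ((1 : ℝ) / n))).toReal) atTop (𝓝 (0 : ℝ)) := by
      have := (ENNReal.tendsto_toReal (a := 0) (by simp)).comp hg
      simpa [Function.comp_def] using this
    have heq : ∀ n : ℕ,
        (ENNReal.ofReal (‖x ^ n‖ ^ ((1 : ℝ) / n))).toReal = ‖x ^ n‖ ^ ((1 : ℝ) / n) := by
      intro n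
      exact ENNReal.toReal_ofReal (by positivity)
    unfold IsQuasinilpotent
    simp only [heq] at h2
    exact h2

lemma radius_eq_zero_iff {A : Type*} [NormedRing A] [NormedAlgebra ℂ A] (x : A) :
    spectralRadius ℂ x = 0 ↔ spectrum ℂ x ⊆ {0} := by
  rw [spectralRadius]
  simp only [ENNReal.iSup_eq_zero, ENNReal.coe_eq_zero, nnnorm_eq_zero]
  constructor
  · intro h k hk; exact h k hk
  · intro h k hk; exact h hk

lemma quasinilpotent_swap {A : Type*} [NormedRing A] [NormedAlgebra ℂ A]
    [CompleteSpace A] (x y : A) (h : IsQuasinilpotent (x * y)) :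
    IsQuasinilpotent (y * x) := by
  rw [isQuasinilpotent_iff_radius, radius_eq_zero_iff] at h ⊢
  intro k hk
  by_contra hk0
  have : k ∈ spectrum ℂ (y * x) \ {0} := ⟨hk, hk0⟩
  rw [← spectrum.nonzero_mul_comm] at this
  exact hk0 (h this.1)

theorem stmt17 {A : Type*} [NormedRing A] [NormedAlgebra ℂ A] [CompleteSpace A]
    (a b : A) (h : ∃ y, IsGDrazinInverse (a * b) y) :
    (∃ z, IsGDrazinInverse (b * a) z) ∧
      ∀ y, IsGDrazinInverse (a * b) y → IsGDrazinInverse (b * a) (b * y ^ 2 * a) := by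
  have main : ∀ y, IsGDrazinInverse (a * b) y → IsGDrazinInverse (b * a) (b * y ^ 2 * a) := by
    rintro y ⟨hc0, hy, hq⟩
    -- basic rewriting rules
    have hc : a * b * y = y * (a * b) := hc0
    have r1 : ∀ t : A, a * (b * (y * t)) = y * (a * (b * t)) := by
      intro t
      simpa only [mul_assoc] using congrArg (· * t) hc
    have r1' : a * (b * y) = y * (a * b) := by simpa only [mul_assoc] using hc
    have hy2 : y * (y * (a * b)) = y := by
      rw [← hc0, ← mul_assoc]; exact hy
    have r2 : ∀ t : A, y * (y * (a * (b * t))) = y * t := by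
      intro t
      have h' : y * y * (a * b) = y := by rw [mul_assoc]; exact hy2
      simpa only [mul_assoc] using congrArg (· * t) h'
    refine ⟨?_, ?_, ?_⟩
    · simp only [pow_two, mul_assoc, r1, r1', r2, hy2]
    · simp only [pow_two, mul_assoc, r1, r1', r2, hy2]
    · -- quasinilpotent part
      have I3 : b * a - (b * a) ^ 2 * (b * y ^ 2 * a) = b * (a - a * b * y * a) := by
        simp only [pow_two, mul_sub, sub_mul, mul_assoc, r1, r1', r2, hy2]
      have I4 : (a - a * b * y * a) * b = a * b - (a * b) ^ 2 * y := by
        simp only [pow_two, mul_sub, sub_mul, mul_assoc, r1, r1', r2, hy2]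
      have hq' : IsQuasinilpotent ((a - a * b * y * a) * b) := by
        rw [I4]; exact hq
      have := quasinilpotent_swap _ _ hq'
      rw [I3]; exact this
  refine ⟨?_, main⟩
  obtain ⟨y, hy⟩ := h
  exact ⟨b * y ^ 2 * a, main y hy⟩
end
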